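/- (Existence of $\mathcal{G}$-convex $r$-nets) Let $K \subseteq L^0(\mathcal{G})$ be $\mathcal{G}$-convexly compact, and let $d$ be a metric on $L^0$ compatible with convergence in probability. Then for every $r > 0$ there exists a finite set $\mathcal{K} = \{k_1,\ldots,k_n\} \subseteq K$ such that every $x \in K$ satisfies $d(x, y) \leq r$ for some $y \in \operatorname{conv}_{\mathcal{G}}(\mathcal{K})$, the set of finite $\mathcal{G}$-convex combinations of elements of $\mathcal{K}$. -/

import Mathlib

open MeasureTheory Filter Set
open scoped ENNReal Topology

/-- `f ∈ L⁰₊₊(G)`: `f` is `G`-measurable and a.s. strictly positive. -/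
def Lpp {Ω : Type*} [MeasurableSpace Ω] (G : MeasurableSpace Ω) (P : Measure Ω)
    (f : Ω → ℝ) : Prop :=
  Measurable[G] f ∧ ∀ᵐ ω ∂P, 0 < f ω

/-- `h` is a finite `G`-convex combination of the tail `k n, k (n+1), …` of the sequence `k`. -/
def GTailConvexComb {Ω : Type*} (G : MeasurableSpace Ω) (k : ℕ → Ω → ℝ) (n : ℕ)
    (h : Ω → ℝ) : Prop :=
  ∃ (m : ℕ) (w : ℕ → Ω → ℝ), (∀ i, Measurable[G] (w i)) ∧ (∀ i ω, 0 ≤ w i ω) ∧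
    (∀ ω, ∑ i ∈ Finset.range m, w i ω = 1) ∧
    ∀ ω, h ω = ∑ i ∈ Finset.range m, w i ω * k (n + i) ω

/-- `K` is `G`-convexly compact: it is `G`-convex, closed in probability, and every sequence
in `K` admits forward `G`-convex combinations converging almost surely to an element of `K`. -/
def GConvexlyCompact {Ω : Type*} [MeasurableSpace Ω] (G : MeasurableSpace Ω) (P : Measure Ω)
    (K : Set (Ω → ℝ)) : Prop :=
  (∀ x ∈ K, ∀ y ∈ K, ∀ g : Ω → ℝ, Measurable[G] g → (∀ ω, 0 ≤ g ω ∧ g ω ≤ 1) →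
    (fun ω => g ω * x ω + (1 - g ω) * y ω) ∈ K) ∧
  (∀ (f : ℕ → Ω → ℝ) (g : Ω → ℝ), (∀ n, f n ∈ K) → TendstoInMeasure P f atTop g → g ∈ K) ∧
  (∀ k : ℕ → Ω → ℝ, (∀ n, k n ∈ K) →
    ∃ (h : ℕ → Ω → ℝ) (hl : Ω → ℝ), (∀ n, GTailConvexComb G k n (h n)) ∧ hl ∈ K ∧
      ∀ᵐ ω ∂P, Tendsto (fun n => h n ω) atTop (𝓝 (hl ω)))

/-- Existence of finite `𝒢`-convex `r`-nets in a `𝒢`-convexly compact set `K ⊆ L⁰(𝒢)`: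
for every `r > 0` there are finitely many `k₁, …, kₙ ∈ K` such that every `x ∈ K` is within
distance `r` (in the metric `d(X,Y) = E[min(|X-Y|,1)]` of convergence in probability) of some
`𝒢`-convex combination of the `kᵢ`. -/

lemma min1_subadd (p q : ℝ) (hp : 0 ≤ p) (hq : 0 ≤ q) :
    min (p + q) 1 ≤ min p 1 + min q 1 := by
  rcases le_total (p + q) 1 with h3 | h3
  · rw [min_eq_left h3, min_eq_left (by linarith : p ≤ 1), min_eq_left (by linarith : q ≤ 1)]
  · rw [min_eq_right h3]
    rcases le_total p 1 with h1 | h1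
    · rw [min_eq_left h1]
      rcases le_total q 1 with h2 | h2
      · rw [min_eq_left h2]; linarith
      · rw [min_eq_right h2]; linarith
    · rw [min_eq_right h1]
      have : 0 ≤ min q 1 := le_min hq zero_le_one
      linarith

lemma int_bdd {Ω : Type*} [MeasurableSpace Ω] (P : Measure Ω) [IsProbabilityMeasure P]
    (f : Ω → ℝ) (hf : Measurable f) (hb : ∀ ω, |f ω| ≤ 1) : Integrable f P :=
  (integrable_const (1:ℝ)).mono' hf.aestronglyMeasurable
    (ae_of_all _ (by simpa [Real.norm_eq_abs] using hb))

lemma clamp_facts (a b x : ℝ) :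
    0 ≤ (if a = b then (1:ℝ) else (b - max (min a b) (min x (max a b)))/(b - a)) ∧
    (if a = b then (1:ℝ) else (b - max (min a b) (min x (max a b)))/(b - a)) ≤ 1 ∧
    (if a = b then (1:ℝ) else (b - max (min a b) (min x (max a b)))/(b - a)) * a +
      (1 - (if a = b then (1:ℝ) else (b - max (min a b) (min x (max a b)))/(b - a))) * b
      = max (min a b) (min x (max a b)) ∧
    min |x - max (min a b) (min x (max a b))| 1
      ≤ min (max (x - b) 0) 1 + min (max (a - x) 0) 1 := by
  set y := max (min a b) (min x (max a b)) with hy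
  set t := if a = b then (1:ℝ) else (b - y)/(b - a) with ht
  have hylo : min a b ≤ y := le_max_left _ _
  have hyhi : y ≤ max a b := max_le (min_le_max) (min_le_right _ _)
  have habs : |x - y| ≤ max (x - max a b) 0 + max (min a b - x) 0 := by
    rcases le_total x (min a b) with h | h
    · have hyx : y = min a b := by
        rw [hy, max_eq_left]
        exact le_trans (min_le_left _ _) h
      rw [hyx, abs_of_nonpos (by linarith)]
      have := le_max_left (min a b - x) (0:ℝ)
      have := le_max_right (x - max a b) (0:ℝ)
      linarith
    · rcases le_total x (max a b) with h2 | h2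
      · have hyx : y = x := by
          rw [hy, min_eq_left h2, max_eq_right h]
        rw [hyx]
        have := le_max_right (x - max a b) (0:ℝ)
        have := le_max_right (min a b - x) (0:ℝ)
        simp
        linarith
      · have hyx : y = max a b := by
          rw [hy, min_eq_right h2, max_eq_right min_le_max]
        rw [hyx, abs_of_nonneg (by linarith)]
        have := le_max_left (x - max a b) (0:ℝ)
        have := le_max_right (min a b - x) (0:ℝ)
        linarith
  have hineq : min |x - y| 1 ≤ min (max (x - b) 0) 1 + min (max (a - x) 0) 1 := by
    calc min |x - y| 1 ≤ min (max (x - max a b) 0 + max (min a b - x) 0) 1 := by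
          apply min_le_min _ le_rfl
          exact le_trans (le_trans habs (le_refl _)) (le_refl _)
      _ ≤ min (max (x - max a b) 0) 1 + min (max (min a b - x) 0) 1 :=
          min1_subadd _ _ (le_max_right _ _) (le_max_right _ _)
      _ ≤ min (max (x - b) 0) 1 + min (max (a - x) 0) 1 := by
          refine add_le_add (min_le_min ?_ le_rfl) (min_le_min ?_ le_rfl)
          · exact max_le_max (sub_le_sub_left (le_max_right a b) x) le_rfl
          · exact max_le_max (sub_le_sub_right (min_le_left a b) x) le_rfl
  by_cases hab : a = b
  · subst hab
    have hya : y = a := by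
      rw [hy]
      simp [max_eq_left (min_le_right x a)]
    rw [ht, if_pos rfl]
    exact ⟨zero_le_one, le_rfl, by rw [hya]; ring, hineq⟩
  · have h0 : b - a ≠ 0 := sub_ne_zero.2 (Ne.symm hab)
    rw [ht, if_neg hab]
    have hcomb : (b - y)/(b - a) * a + (1 - (b - y)/(b - a)) * b = y := by
      field_simp
      ring
    rcases lt_or_gt_of_ne hab with hlt | hlt
    · have hmin : min a b = a := min_eq_left hlt.le
      have hmax : max a b = b := max_eq_right hlt.le
      constructor
      · exact div_nonneg (by rw [hmax] at hyhi; linarith) (by linarith)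
      · refine ⟨(div_le_one (by linarith)).2 (by rw [hmin] at hylo; linarith), hcomb, hineq⟩
    · have hmin : min a b = b := min_eq_right hlt.le
      have hmax : max a b = a := max_eq_left hlt.le
      have hrw : (b - y)/(b - a) = (y - b)/(a - b) := by
        rw [show b - y = -(y - b) by ring, show b - a = -(a - b) by ring, neg_div_neg_eq]
      rw [hrw]
      constructor
      · exact div_nonneg (by rw [hmin] at hylo; linarith) (by linarith)
      · refine ⟨(div_le_one (by linarith)).2 (by rw [hmax] at hyhi; linarith), ?_, hineq⟩
        rw [← hrw]; exact hcomb

lemma exists_upper {Ω : Type*} [F : MeasurableSpace Ω] (G : MeasurableSpace Ω) (hG : G ≤ F)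
    (P : Measure Ω) [IsProbabilityMeasure P]
    (K : Set (Ω → ℝ)) (hK : ∀ f ∈ K, Measurable[G] f) (hcc : GConvexlyCompact G P K)
    (f0 : Ω → ℝ) (hf0 : f0 ∈ K) (s : ℝ) (hs : 0 < s) :
    ∃ M ∈ K, ∀ x ∈ K, (∫ ω, min (max (x ω - M ω) 0) 1 ∂P) ≤ s := by
  by_contra hcon
  push_neg at hcon
  -- max of two elements of K is in K
  have hmaxmem : ∀ a ∈ K, ∀ b ∈ K, (fun ω => max (a ω) (b ω)) ∈ K := by
    intro a ha b hb
    have hmeas : Measurable[G] (fun ω => if a ω ≤ b ω then (0:ℝ) else 1) :=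
      Measurable.ite (measurableSet_le (hK a ha) (hK b hb)) measurable_const measurable_const
    have hmem := hcc.1 a ha b hb _ hmeas (fun ω => by split_ifs <;> norm_num)
    have heq : (fun ω => max (a ω) (b ω)) =
        (fun ω => (if a ω ≤ b ω then (0:ℝ) else 1) * a ω +
          (1 - (if a ω ≤ b ω then (0:ℝ) else 1)) * b ω) := by
      funext ω
      by_cases h : a ω ≤ b ω
      · simp [h, max_eq_right h]
      · simp [h, max_eq_left (le_of_not_ge h)]
    rw [heq]; exact hmem
  have pick : ∀ p : {f : Ω → ℝ // f ∈ K}, ∃ q : {f : Ω → ℝ // f ∈ K},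
      s < ∫ ω, min (max (q.1 ω - p.1 ω) 0) 1 ∂P := by
    intro p
    obtain ⟨x, hx, hxs⟩ := hcon p.1 p.2
    exact ⟨⟨x, hx⟩, hxs⟩
  choose pk hpk using pick
  obtain ⟨MK, hMsucc⟩ : ∃ MK : ℕ → {f : Ω → ℝ // f ∈ K},
      ∀ n, (MK (n+1)).1 = fun ω => max ((MK n).1 ω) ((pk (MK n)).1 ω) :=
    ⟨fun n => Nat.rec ⟨f0, hf0⟩
      (fun _ p => ⟨fun ω => max (p.1 ω) ((pk p).1 ω), hmaxmem p.1 p.2 (pk p).1 (pk p).2⟩) n,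
     fun n => rfl⟩
  have hmono : ∀ ω, Monotone fun n => (MK n).1 ω := by
    intro ω
    apply monotone_nat_of_le_succ
    intro n
    rw [hMsucc n]
    exact le_max_left _ _
  obtain ⟨h, hl, hTail, hlK, hconv⟩ := hcc.2.2 (fun n => (MK n).1) (fun n => (MK n).2)
  have hge : ∀ n ω, (MK n).1 ω ≤ h n ω := by
    intro n ω
    obtain ⟨m, w, hwmeas, hwnn, hwsum, hweq⟩ := hTail n
    rw [hweq ω]
    calc (MK n).1 ω = ∑ i ∈ Finset.range m, w i ω * (MK n).1 ω := by
          rw [← Finset.sum_mul, hwsum ω, one_mul]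
      _ ≤ ∑ i ∈ Finset.range m, w i ω * (MK (n+i)).1 ω := by
          refine Finset.sum_le_sum fun i _ => ?_
          exact mul_le_mul_of_nonneg_left (hmono ω (Nat.le_add_right n i)) (hwnn i ω)
  -- difference identity
  have hdiff : ∀ n ω, max ((pk (MK n)).1 ω - (MK n).1 ω) 0 = (MK (n+1)).1 ω - (MK n).1 ω := by
    intro n ω
    rw [hMsucc n]
    dsimp only
    rcases le_total ((pk (MK n)).1 ω) ((MK n).1 ω) with hc | hc
    · rw [max_eq_right (by linarith), max_eq_left hc, sub_self]
    · rw [max_eq_left (by linarith), max_eq_right hc]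
  -- a.e. convergence of the gaps to 0
  have hae : ∀ᵐ ω ∂P, Tendsto
      (fun n => min (max ((pk (MK n)).1 ω - (MK n).1 ω) 0) 1) atTop (𝓝 0) := by
    filter_upwards [hconv] with ω hω
    have hub : ∀ n, (MK n).1 ω ≤ hl ω := by
      intro n
      refine ge_of_tendsto hω ?_
      filter_upwards [eventually_ge_atTop n] with m hm
      exact le_trans (hmono ω hm) (hge m ω)
    have hbdd : BddAbove (Set.range fun n => (MK n).1 ω) := by
      refine ⟨hl ω, ?_⟩
      rintro y ⟨n, rfl⟩
      exact hub n
    have hlim : Tendsto (fun n => (MK n).1 ω) atTop (𝓝 (⨆ n, (MK n).1 ω)) :=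
      tendsto_atTop_ciSup (hmono ω) hbdd
    have hlim' : Tendsto (fun n => (MK (n+1)).1 ω) atTop (𝓝 (⨆ n, (MK n).1 ω)) :=
      hlim.comp (tendsto_add_atTop_nat 1)
    have hd : Tendsto (fun n => (MK (n+1)).1 ω - (MK n).1 ω) atTop (𝓝 0) := by
      have := hlim'.sub hlim
      simpa using this
    have : Tendsto (fun n => min ((MK (n+1)).1 ω - (MK n).1 ω) 1) atTop (𝓝 (min 0 1)) :=
      hd.min tendsto_const_nhds
    rw [min_eq_left zero_le_one] at this
    simpa only [hdiff] using this
  -- measurability of the gap integrands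
  have hmeasG : ∀ n, Measurable[G] (fun ω => min (max ((pk (MK n)).1 ω - (MK n).1 ω) 0) 1) :=
    fun n =>
      (((hK _ (pk (MK n)).2).sub (hK _ (MK n).2)).max measurable_const).min measurable_const
  have hint : Tendsto
      (fun n => ∫ ω, min (max ((pk (MK n)).1 ω - (MK n).1 ω) 0) 1 ∂P) atTop (𝓝 0) := by
    have := tendsto_integral_of_dominated_convergence (μ := P)
      (F := fun n ω => min (max ((pk (MK n)).1 ω - (MK n).1 ω) 0) 1)
      (f := fun _ => (0:ℝ)) (bound := fun _ => (1:ℝ))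
      (fun n => Measurable.aestronglyMeasurable (μ := P) (hmeasG n))
      (integrable_const 1)
      (fun n => ae_of_all _ fun ω => by
        have h0 : (0:ℝ) ≤ min (max ((pk (MK n)).1 ω - (MK n).1 ω) 0) 1 :=
          le_min (le_max_right _ _) zero_le_one
        have h1' : min (max ((pk (MK n)).1 ω - (MK n).1 ω) 0) 1 ≤ 1 := min_le_right _ _
        simp only [Real.norm_eq_abs, abs_of_nonneg h0]; exact h1')
      hae
    simpa using this
  have hfin : s ≤ 0 :=
    ge_of_tendsto hint (Eventually.of_forall fun n => (hpk (MK n)).le)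
  linarith

lemma exists_lower {Ω : Type*} [F : MeasurableSpace Ω] (G : MeasurableSpace Ω) (hG : G ≤ F)
    (P : Measure Ω) [IsProbabilityMeasure P]
    (K : Set (Ω → ℝ)) (hK : ∀ f ∈ K, Measurable[G] f) (hcc : GConvexlyCompact G P K)
    (f0 : Ω → ℝ) (hf0 : f0 ∈ K) (s : ℝ) (hs : 0 < s) :
    ∃ M ∈ K, ∀ x ∈ K, (∫ ω, min (max (M ω - x ω) 0) 1 ∂P) ≤ s := by
  by_contra hcon
  push_neg at hcon
  have hminmem : ∀ a ∈ K, ∀ b ∈ K, (fun ω => min (a ω) (b ω)) ∈ K := by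
    intro a ha b hb
    have hmeas : Measurable[G] (fun ω => if a ω ≤ b ω then (1:ℝ) else 0) :=
      Measurable.ite (measurableSet_le (hK a ha) (hK b hb)) measurable_const measurable_const
    have hmem := hcc.1 a ha b hb _ hmeas (fun ω => by split_ifs <;> norm_num)
    have heq : (fun ω => min (a ω) (b ω)) =
        (fun ω => (if a ω ≤ b ω then (1:ℝ) else 0) * a ω +
          (1 - (if a ω ≤ b ω then (1:ℝ) else 0)) * b ω) := by
      funext ω
      by_cases h : a ω ≤ b ω
      · simp [h, min_eq_left h]
      · simp [h, min_eq_right (le_of_not_ge h)]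
    rw [heq]; exact hmem
  have pick : ∀ p : {f : Ω → ℝ // f ∈ K}, ∃ q : {f : Ω → ℝ // f ∈ K},
      s < ∫ ω, min (max (p.1 ω - q.1 ω) 0) 1 ∂P := by
    intro p
    obtain ⟨x, hx, hxs⟩ := hcon p.1 p.2
    exact ⟨⟨x, hx⟩, hxs⟩
  choose pk hpk using pick
  obtain ⟨MK, hMsucc⟩ : ∃ MK : ℕ → {f : Ω → ℝ // f ∈ K},
      ∀ n, (MK (n+1)).1 = fun ω => min ((MK n).1 ω) ((pk (MK n)).1 ω) :=
    ⟨fun n => Nat.rec ⟨f0, hf0⟩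
      (fun _ p => ⟨fun ω => min (p.1 ω) ((pk p).1 ω), hminmem p.1 p.2 (pk p).1 (pk p).2⟩) n,
     fun n => rfl⟩
  have hanti : ∀ ω, Antitone fun n => (MK n).1 ω := by
    intro ω
    apply antitone_nat_of_succ_le
    intro n
    rw [hMsucc n]
    exact min_le_left _ _
  obtain ⟨h, hl, hTail, hlK, hconv⟩ := hcc.2.2 (fun n => (MK n).1) (fun n => (MK n).2)
  have hge : ∀ n ω, h n ω ≤ (MK n).1 ω := by
    intro n ω
    obtain ⟨m, w, hwmeas, hwnn, hwsum, hweq⟩ := hTail n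
    rw [hweq ω]
    calc ∑ i ∈ Finset.range m, w i ω * (MK (n+i)).1 ω
        ≤ ∑ i ∈ Finset.range m, w i ω * (MK n).1 ω := by
          refine Finset.sum_le_sum fun i _ => ?_
          exact mul_le_mul_of_nonneg_left (hanti ω (Nat.le_add_right n i)) (hwnn i ω)
      _ = (MK n).1 ω := by rw [← Finset.sum_mul, hwsum ω, one_mul]
  have hdiff : ∀ n ω, max ((MK n).1 ω - (pk (MK n)).1 ω) 0 = (MK n).1 ω - (MK (n+1)).1 ω := by
    intro n ω
    rw [hMsucc n]
    dsimp only
    rcases le_total ((MK n).1 ω) ((pk (MK n)).1 ω) with hc | hc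
    · rw [max_eq_right (by linarith), min_eq_left hc, sub_self]
    · rw [max_eq_left (by linarith), min_eq_right hc]
  have hae : ∀ᵐ ω ∂P, Tendsto
      (fun n => min (max ((MK n).1 ω - (pk (MK n)).1 ω) 0) 1) atTop (𝓝 0) := by
    filter_upwards [hconv] with ω hω
    have hub : ∀ n, hl ω ≤ (MK n).1 ω := by
      intro n
      refine le_of_tendsto hω ?_
      filter_upwards [eventually_ge_atTop n] with m hm
      exact le_trans (hge m ω) (hanti ω hm)
    have hbdd : BddBelow (Set.range fun n => (MK n).1 ω) := by
      refine ⟨hl ω, ?_⟩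
      rintro y ⟨n, rfl⟩
      exact hub n
    have hlim : Tendsto (fun n => (MK n).1 ω) atTop (𝓝 (⨅ n, (MK n).1 ω)) :=
      tendsto_atTop_ciInf (hanti ω) hbdd
    have hlim' : Tendsto (fun n => (MK (n+1)).1 ω) atTop (𝓝 (⨅ n, (MK n).1 ω)) :=
      hlim.comp (tendsto_add_atTop_nat 1)
    have hd : Tendsto (fun n => (MK n).1 ω - (MK (n+1)).1 ω) atTop (𝓝 0) := by
      have := hlim.sub hlim'
      simpa using this
    have : Tendsto (fun n => min ((MK n).1 ω - (MK (n+1)).1 ω) 1) atTop (𝓝 (min 0 1)) :=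
      hd.min tendsto_const_nhds
    rw [min_eq_left zero_le_one] at this
    simpa only [hdiff] using this
  have hmeasG : ∀ n, Measurable[G] (fun ω => min (max ((MK n).1 ω - (pk (MK n)).1 ω) 0) 1) :=
    fun n =>
      (((hK _ (MK n).2).sub (hK _ (pk (MK n)).2)).max measurable_const).min measurable_const
  have hint : Tendsto
      (fun n => ∫ ω, min (max ((MK n).1 ω - (pk (MK n)).1 ω) 0) 1 ∂P) atTop (𝓝 0) := by
    have := tendsto_integral_of_dominated_convergence (μ := P)
      (F := fun n ω => min (max ((MK n).1 ω - (pk (MK n)).1 ω) 0) 1)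
      (f := fun _ => (0:ℝ)) (bound := fun _ => (1:ℝ))
      (fun n => Measurable.aestronglyMeasurable (μ := P) (hmeasG n))
      (integrable_const 1)
      (fun n => ae_of_all _ fun ω => by
        have h0 : (0:ℝ) ≤ min (max ((MK n).1 ω - (pk (MK n)).1 ω) 0) 1 :=
          le_min (le_max_right _ _) zero_le_one
        have h1' : min (max ((MK n).1 ω - (pk (MK n)).1 ω) 0) 1 ≤ 1 := min_le_right _ _
        simp only [Real.norm_eq_abs, abs_of_nonneg h0]; exact h1')
      hae
    simpa using this
  have hfin : s ≤ 0 :=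
    ge_of_tendsto hint (Eventually.of_forall fun n => (hpk (MK n)).le)
  linarith

theorem stmt15 {Ω : Type*} [F : MeasurableSpace Ω] (G : MeasurableSpace Ω) (hG : G ≤ F)
    (P : Measure Ω) [IsProbabilityMeasure P]
    (K : Set (Ω → ℝ)) (hK : ∀ f ∈ K, Measurable[G] f) (hcc : GConvexlyCompact G P K) :
    ∀ r : ℝ, 0 < r →
      ∃ (n : ℕ) (k : Fin n → Ω → ℝ), (∀ i, k i ∈ K) ∧
        ∀ x ∈ K, ∃ w : Fin n → Ω → ℝ,
          (∀ i, Measurable[G] (w i)) ∧ (∀ i ω, 0 ≤ w i ω) ∧ (∀ ω, ∑ i, w i ω = 1) ∧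
          (∫ ω, min |x ω - ∑ i, w i ω * k i ω| 1 ∂P) ≤ r := by
  intro r hr
  rcases K.eq_empty_or_nonempty with hKe | ⟨f0, hf0⟩
  · refine ⟨0, fun i => i.elim0, fun i => i.elim0, fun x hx => ?_⟩
    rw [hKe] at hx
    exact absurd hx (Set.notMem_empty x)
  · obtain ⟨M, hM, hMub⟩ := exists_upper (F := F) G hG P K hK hcc f0 hf0 (r/2) (by linarith)
    obtain ⟨m, hm, hmlb⟩ := exists_lower (F := F) G hG P K hK hcc f0 hf0 (r/2) (by linarith)
    refine ⟨2, ![m, M], fun i => ?_, fun x hx => ?_⟩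
    · fin_cases i
      · simpa using hm
      · simpa using hM
    · obtain ⟨y, t, hy, ht⟩ : ∃ (y t : Ω → ℝ),
          (∀ ω, y ω = max (min (m ω) (M ω)) (min (x ω) (max (m ω) (M ω)))) ∧
          (∀ ω, t ω = if m ω = M ω then 1
            else (M ω - max (min (m ω) (M ω)) (min (x ω) (max (m ω) (M ω))))/(M ω - m ω)) :=
        ⟨_, _, fun _ => rfl, fun _ => rfl⟩
    -- pointwise facts
      have hcf := fun ω => clamp_facts (m ω) (M ω) (x ω)
      have ht0 : ∀ ω, 0 ≤ t ω := fun ω => by rw [ht ω]; exact (hcf ω).1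
      have ht1 : ∀ ω, t ω ≤ 1 := fun ω => by rw [ht ω]; exact (hcf ω).2.1
      have hcomb : ∀ ω, t ω * m ω + (1 - t ω) * M ω = y ω := fun ω => by
        rw [ht ω, hy ω]; exact (hcf ω).2.2.1
      have hptw : ∀ ω, min |x ω - y ω| 1
          ≤ min (max (x ω - M ω) 0) 1 + min (max (m ω - x ω) 0) 1 := fun ω => by
        rw [hy ω]; exact (hcf ω).2.2.2
      -- measurability
      have hymeas : Measurable[G] y := by
        have : y = fun ω => max (min (m ω) (M ω)) (min (x ω) (max (m ω) (M ω))) := funext hy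
        rw [this]
        exact ((hK m hm).min (hK M hM)).max ((hK x hx).min ((hK m hm).max (hK M hM)))
      have htmeas : Measurable[G] t := by
        have heq : t = fun ω => if m ω = M ω then 1
            else (M ω - max (min (m ω) (M ω)) (min (x ω) (max (m ω) (M ω))))/(M ω - m ω) :=
          funext ht
        rw [heq]
        refine Measurable.ite (measurableSet_eq_fun (hK m hm) (hK M hM)) measurable_const ?_
        have hy' : Measurable[G]
            (fun ω => max (min (m ω) (M ω)) (min (x ω) (max (m ω) (M ω)))) :=
          ((hK m hm).min (hK M hM)).max ((hK x hx).min ((hK m hm).max (hK M hM)))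
        exact ((hK M hM).sub hy').div ((hK M hM).sub (hK m hm))
      refine ⟨![t, fun ω => 1 - t ω], ?_, ?_, ?_, ?_⟩
      · intro i
        fin_cases i
        · simpa using htmeas
        · simpa using (show Measurable[G] (fun ω => 1 - t ω) from measurable_const.sub htmeas)
      · intro i ω
        fin_cases i
        · simpa using ht0 ω
        · simpa using sub_nonneg.2 (ht1 ω)
      · intro ω
        rw [Fin.sum_univ_two]
        simp only [Matrix.cons_val_zero, Matrix.cons_val_one, Matrix.head_cons]
        ring
      · have hyc : ∀ ω, (∑ i, ![t, fun ω' => 1 - t ω'] i ω * ![m, M] i ω) = y ω := by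
          intro ω
          rw [Fin.sum_univ_two]
          simp only [Matrix.cons_val_zero, Matrix.cons_val_one, Matrix.head_cons]
          exact hcomb ω
        have hb01 : ∀ v : ℝ, 0 ≤ v → |min v 1| ≤ 1 := fun v hv => by
          rw [abs_of_nonneg (le_min hv zero_le_one)]
          exact min_le_right v 1
        have intL : Integrable (fun ω => min |x ω - y ω| 1) P :=
          int_bdd P _ ((((hK x hx).sub hymeas).abs).min measurable_const)
            (fun ω => hb01 _ (abs_nonneg _))
        have intA : Integrable (fun ω => min (max (x ω - M ω) 0) 1) P :=
          int_bdd P _ ((((hK x hx).sub (hK M hM)).max measurable_const).min measurable_const)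
            (fun ω => hb01 _ (le_max_right _ _))
        have intB : Integrable (fun ω => min (max (m ω - x ω) 0) 1) P :=
          int_bdd P _ ((((hK m hm).sub (hK x hx)).max measurable_const).min measurable_const)
            (fun ω => hb01 _ (le_max_right _ _))
        calc (∫ ω, min |x ω - ∑ i, ![t, fun ω' => 1 - t ω'] i ω * ![m, M] i ω| 1 ∂P)
            = ∫ ω, min |x ω - y ω| 1 ∂P :=
              integral_congr_ae (ae_of_all _ fun ω => by simp only [hyc])
          _ ≤ ∫ ω, (min (max (x ω - M ω) 0) 1 + min (max (m ω - x ω) 0) 1) ∂P :=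
              integral_mono intL (intA.add intB) hptw
          _ = (∫ ω, min (max (x ω - M ω) 0) 1 ∂P) + ∫ ω, min (max (m ω - x ω) 0) 1 ∂P :=
              integral_add intA intB
          _ ≤ r/2 + r/2 := add_le_add (hMub x hx) (hmlb x hx)
          _ = r := by ring
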